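/- arXiv:1012.5028 — 4 statements merged into one kernel-verified Lean document; each statement's English description precedes it below -/
import Mathlib

section
/- Let f : ℝ → ℝ be a Lipschitz (or C¹) function that is 4π-periodic and anti-2π-periodic, i.e. f(θ + 2π) = -f(θ) for all θ. Then ∫₀^{4π} (f'(θ))² dθ ≥ (1/4) ∫₀^{4π} f(θ)² dθ. -/
open Real intervalIntegral

section aux

open MeasureTheory AddCircle ContinuousMap Complex

lemma parseval_cont {T : ℝ} [hT : Fact (0 < T)] (h : C(AddCircle T, ℂ)) :
    Summable (fun n : ℤ => ‖fourierCoeff (⇑h) n‖ ^ 2) ∧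
    ∑' n : ℤ, ‖fourierCoeff (⇑h) n‖ ^ 2
      = ∫ t : AddCircle T, ‖h t‖ ^ 2 ∂haarAddCircle := by
  have h1 := tsum_sq_fourierCoeff (toLp (E := ℂ) 2 haarAddCircle ℂ h)
  have h2 : ∀ n : ℤ, fourierCoeff (toLp (E := ℂ) 2 haarAddCircle ℂ h) n = fourierCoeff (⇑h) n :=
    fourierCoeff_toLp h
  have hsum : Summable (fun n : ℤ => ‖fourierCoeff (⇑h) n‖ ^ 2) := by
    have hm := (fourierBasis.repr (toLp (E := ℂ) 2 haarAddCircle ℂ h)).property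
    have := (memℓp_gen_iff (p := 2) (by norm_num)).1 hm
    simp only [fourierBasis_repr, h2] at this
    convert this using 2 with n
    rw [ENNReal.toReal_ofNat, ← Real.rpow_natCast]
    norm_num
  refine ⟨hsum, ?_⟩
  simp only [h2] at h1
  rw [h1]
  refine integral_congr_ae ?_
  filter_upwards [ContinuousMap.coeFn_toLp (E := ℂ) (p := 2) (μ := haarAddCircle) (𝕜 := ℂ) h]
    with t ht
  rw [ht]

end aux

/-- Anti-periodic Wirtinger inequality: if `f` is `C¹` with `f (θ + 2π) = -f θ`
(hence `4π`-periodic), then `∫₀^{4π} f'² ≥ (1/4) ∫₀^{4π} f²`. -/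
theorem antiperiodic_wirtinger (f : ℝ → ℝ) (hf : ContDiff ℝ 1 f)
    (hanti : ∀ θ : ℝ, f (θ + 2 * π) = - f θ) :
    (1 / 4) * ∫ θ in (0:ℝ)..(4 * π), (f θ) ^ 2 ≤ ∫ θ in (0:ℝ)..(4 * π), (deriv f θ) ^ 2 := by
  classical
  have hπ : (0:ℝ) < π := Real.pi_pos
  haveI hT : Fact ((0:ℝ) < 4 * π) := ⟨by linarith⟩
  have hab : (0:ℝ) < 4 * π := hT.out
  -- periodicity
  have hper : ∀ x : ℝ, f (x + 4 * π) = f x := by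
    intro x
    have h1 : x + 4 * π = x + 2 * π + 2 * π := by ring
    rw [h1, hanti, hanti, neg_neg]
  -- derivative continuity
  have hfd : Differentiable ℝ f := hf.differentiable one_ne_zero
  have hf'c : Continuous (deriv f) := hf.continuous_deriv le_rfl
  have hfc : Continuous f := hf.continuous
  -- deriv is also 4π-periodic
  have hper' : ∀ x : ℝ, deriv f (x + 4 * π) = deriv f x := by
    intro x
    have : (fun y : ℝ => f (y + 4 * π)) = f := funext hper
    rw [← deriv_comp_add_const f (4 * π) x, this]
  -- complexifications
  set fc : ℝ → ℂ := fun x => (f x : ℂ) with hfc_def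
  set gc : ℝ → ℂ := fun x => Complex.ofReal (deriv f x) with hgc_def
  have hperc : Function.Periodic fc (4 * π) := fun x => by simp [fc, hper x]
  have hperc' : Function.Periodic gc (4 * π) := fun x => by simp [gc, hper' x]
  -- continuous lifts to the circle
  set F : C(AddCircle (4 * π), ℂ) :=
    ⟨hperc.lift, continuous_coinduced_dom.mpr (Complex.continuous_ofReal.comp hfc)⟩ with hF_def
  set G : C(AddCircle (4 * π), ℂ) :=
    ⟨hperc'.lift, continuous_coinduced_dom.mpr (Complex.continuous_ofReal.comp hf'c)⟩ with hG_def
  have hF_coe : ∀ x : ℝ, F (x : AddCircle (4 * π)) = fc x := fun x => hperc.lift_coe x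
  have hG_coe : ∀ x : ℝ, G (x : AddCircle (4 * π)) = gc x := fun x => hperc'.lift_coe x
  -- Fourier coefficients of the lifts equal fourierCoeffOn
  have hF_eq : ∀ n : ℤ, fourierCoeff (⇑F) n = fourierCoeffOn hab fc n := by
    intro n
    rw [fourierCoeff_eq_intervalIntegral _ n 0, fourierCoeffOn_eq_integral]
    simp only [sub_zero, zero_add]
    congr 1
    refine intervalIntegral.integral_congr fun x _ => ?_
    rw [hF_coe x, fourier_coe_apply, fourier_coe_apply]
    norm_num
  have hG_eq : ∀ n : ℤ, fourierCoeff (⇑G) n = fourierCoeffOn hab gc n := by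
    intro n
    rw [fourierCoeff_eq_intervalIntegral _ n 0, fourierCoeffOn_eq_integral]
    simp only [sub_zero, zero_add]
    congr 1
    refine intervalIntegral.integral_congr fun x _ => ?_
    rw [hG_coe x, fourier_coe_apply, fourier_coe_apply]
    norm_num
  -- mean of f vanishes
  have hmean : fourierCoeffOn hab fc 0 = 0 := by
    rw [fourierCoeffOn_eq_integral]
    have hsplit : ∫ x in (0:ℝ)..(4 * π), fourier (-0) (x : AddCircle (4 * π - 0)) • fc x
        = ∫ x in (0:ℝ)..(4 * π), fc x := by
      refine intervalIntegral.integral_congr fun x _ => ?_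
      simp
    rw [hsplit]
    have hint : ∀ a b : ℝ, IntervalIntegrable fc MeasureTheory.volume a b :=
      fun a b => (Complex.continuous_ofReal.comp hfc).intervalIntegrable a b
    have h1 : (∫ x in (0:ℝ)..(2 * π), fc x) + ∫ x in (2 * π)..(4 * π), fc x
        = ∫ x in (0:ℝ)..(4 * π), fc x :=
      intervalIntegral.integral_add_adjacent_intervals (hint 0 (2 * π)) (hint (2 * π) (4 * π))
    have h2 : ∫ x in (2 * π)..(4 * π), fc x = ∫ x in (0:ℝ)..(2 * π), fc (x + 2 * π) := by
      rw [intervalIntegral.integral_comp_add_right fc (2 * π)]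
      ring_nf
    have h3 : ∫ x in (0:ℝ)..(2 * π), fc (x + 2 * π) = - ∫ x in (0:ℝ)..(2 * π), fc x := by
      rw [← intervalIntegral.integral_neg]
      refine intervalIntegral.integral_congr fun x _ => ?_
      simp [fc, hanti x]
    have : ∫ x in (0:ℝ)..(4 * π), fc x = 0 := by
      rw [← h1, h2, h3]; simp
    rw [this, smul_zero]
  -- relation between coefficients of f and deriv f
  have hrel : ∀ n : ℤ, n ≠ 0 →
      fourierCoeffOn hab gc n = ((n : ℂ) * Complex.I / 2) * fourierCoeffOn hab fc n := by
    intro n hn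
    have hderiv : ∀ x, x ∈ Set.uIcc (0:ℝ) (4 * π) → HasDerivAt fc (gc x) x :=
      fun x _ => ((hfd x).hasDerivAt).ofReal_comp
    have hint : IntervalIntegrable gc MeasureTheory.volume 0 (4 * π) :=
      (Complex.continuous_ofReal.comp hf'c).intervalIntegrable 0 (4 * π)
    have h0 := fourierCoeffOn_of_hasDerivAt hab hn hderiv hint
    have hval : fc (4 * π) - fc 0 = 0 := by
      have := hper 0
      simp only [zero_add] at this
      simp [fc, this]
    rw [hval, mul_zero, zero_sub] at h0
    have hπ' : (π : ℂ) ≠ 0 := Complex.ofReal_ne_zero.mpr hπ.ne'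
    have hn' : (n : ℂ) ≠ 0 := Int.cast_ne_zero.mpr hn
    have hI : Complex.I ≠ 0 := Complex.I_ne_zero
    field_simp at h0
    have h5 : (4 * (π:ℂ)) ≠ 0 := by
      norm_cast
      positivity
    refine mul_left_cancel₀ h5 ?_
    push_cast at h0
    linear_combination -h0
  -- Parseval for F and G
  obtain ⟨hFsum, hFpar⟩ := parseval_cont F
  obtain ⟨hGsum, hGpar⟩ := parseval_cont G
  -- termwise bound
  have hterm : ∀ n : ℤ, (1 / 4) * ‖fourierCoeff (⇑F) n‖ ^ 2 ≤ ‖fourierCoeff (⇑G) n‖ ^ 2 := by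
    intro n
    rcases eq_or_ne n 0 with rfl | hn
    · rw [hF_eq, hmean]
      simp [sq_nonneg]
    · rw [hF_eq, hG_eq, hrel n hn]
      rw [norm_mul]
      have h1 : ‖(n : ℂ) * Complex.I / 2‖ = |(n:ℝ)| / 2 := by
        simp [norm_div, Complex.norm_intCast]
      rw [h1, mul_pow, div_pow]
      have h2 : (1:ℝ) ≤ |(n:ℝ)| := by
        rw [← Int.cast_abs]
        exact_mod_cast Int.one_le_abs hn
      have h3 : (1:ℝ) ≤ |(n:ℝ)| ^ 2 := by nlinarith
      nlinarith [sq_nonneg (‖fourierCoeffOn hab fc n‖), sq_nonneg (|(n:ℝ)|)]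
  -- sum the bound
  have hsum_ineq : (1 / 4) * ∑' n : ℤ, ‖fourierCoeff (⇑F) n‖ ^ 2
      ≤ ∑' n : ℤ, ‖fourierCoeff (⇑G) n‖ ^ 2 := by
    rw [← tsum_mul_left]
    exact Summable.tsum_le_tsum hterm (hFsum.mul_left _) hGsum
  rw [hFpar, hGpar] at hsum_ineq
  -- translate circle integrals to interval integrals
  have hFint : ∫ θ in (0:ℝ)..(4 * π), (f θ) ^ 2
      = (4 * π) * ∫ t : AddCircle (4 * π), ‖F t‖ ^ 2 ∂AddCircle.haarAddCircle := by
    have h1 : ∫ x in (0:ℝ)..(0 + 4 * π), ‖F (x : AddCircle (4 * π))‖ ^ 2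
        = ∫ t : AddCircle (4 * π), ‖F t‖ ^ 2 :=
      AddCircle.intervalIntegral_preimage (4 * π) 0 (fun t => ‖F t‖ ^ 2)
    rw [MeasureTheory.integral_congr_ae (Filter.Eventually.of_forall (fun t => rfl)),
      AddCircle.volume_eq_smul_haarAddCircle, MeasureTheory.integral_smul_measure,
      ENNReal.toReal_ofReal hab.le, smul_eq_mul] at h1
    rw [← h1, zero_add]
    refine intervalIntegral.integral_congr fun x _ => ?_
    rw [hF_coe x]
    simp [fc, sq_abs]
  have hGint : ∫ θ in (0:ℝ)..(4 * π), (deriv f θ) ^ 2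
      = (4 * π) * ∫ t : AddCircle (4 * π), ‖G t‖ ^ 2 ∂AddCircle.haarAddCircle := by
    have h1 : ∫ x in (0:ℝ)..(0 + 4 * π), ‖G (x : AddCircle (4 * π))‖ ^ 2
        = ∫ t : AddCircle (4 * π), ‖G t‖ ^ 2 :=
      AddCircle.intervalIntegral_preimage (4 * π) 0 (fun t => ‖G t‖ ^ 2)
    rw [MeasureTheory.integral_congr_ae (Filter.Eventually.of_forall (fun t => rfl)),
      AddCircle.volume_eq_smul_haarAddCircle, MeasureTheory.integral_smul_measure,
      ENNReal.toReal_ofReal hab.le, smul_eq_mul] at h1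
    rw [← h1, zero_add]
    refine intervalIntegral.integral_congr fun x _ => ?_
    rw [hG_coe x]
    simp [gc, sq_abs]
  rw [hFint, hGint]
  nlinarith [hsum_ineq, hπ]
end

section
/- Equality ∫₀^{4π} (f'(θ))² dθ = (1/4) ∫₀^{4π} f(θ)² dθ for a C¹ function f with f(θ+2π) = -f(θ) holds if and only if f(θ) = a cos(θ/2) + b sin(θ/2) for some constants a, b. -/
open scoped ENNReal
open Real intervalIntegral MeasureTheory Set AddCircle Complex ContinuousMap

noncomputable section AW

lemma aw_fourpi_pos : (0:ℝ) < 4 * π := by positivity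

instance : Fact ((0:ℝ) < 4 * π) := ⟨aw_fourpi_pos⟩

/-- The `n`-th Fourier coefficient on `[0, 4π]`. -/
noncomputable def awc (g : ℝ → ℂ) (n : ℤ) : ℂ := fourierCoeffOn aw_fourpi_pos g n

lemma awc_eq_integral (g : ℝ → ℂ) (n : ℤ) :
    awc g n = (1 / (4*π) : ℝ) • ∫ x in (0:ℝ)..(4*π), Complex.exp (2 * π * Complex.I * (-n) * x / (4*π)) * g x := by
  rw [awc, fourierCoeffOn_eq_integral]
  simp only [fourier_coe_apply, sub_zero, smul_eq_mul]
  norm_num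

lemma awc_lift (g : ℝ → ℂ) (n : ℤ) :
    fourierCoeff (AddCircle.liftIco (4*π) 0 g) n = awc g n := by
  rw [fourierCoeff_liftIco_eq, awc, fourierCoeffOn_eq_integral, fourierCoeffOn_eq_integral]
  simp only [fourier_coe_apply, sub_zero, zero_add, smul_eq_mul]

lemma awc_parseval (g : ℝ → ℂ) (hg : Continuous g) (hper : g 0 = g (4*π)) :
    Summable (fun n : ℤ => ‖awc g n‖^2) ∧
      ∑' n : ℤ, ‖awc g n‖^2 = (1/(4*π)) * ∫ θ in (0:ℝ)..(4*π), ‖g θ‖^2 := by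
  have hG : Continuous (AddCircle.liftIco (4*π) 0 g) :=
    AddCircle.liftIco_zero_continuous hper hg.continuousOn
  set G : C(AddCircle (4*π), ℂ) := ⟨_, hG⟩ with hGdef
  set flp := ContinuousMap.toLp (E := ℂ) 2 haarAddCircle ℂ G with hflp
  have hcoeff : ∀ n : ℤ, fourierCoeff (flp : AddCircle (4*π) → ℂ) n = awc g n := by
    intro n
    rw [fourierCoeff_toLp, ← awc_lift]
    rfl
  have hpars := tsum_sq_fourierCoeff flp
  simp_rw [hcoeff] at hpars
  have hsummable : Summable (fun n : ℤ => ‖awc g n‖^2) := by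
    have h1 : Memℓp (fun i => (fourierBasis (T := 4*π)).repr flp i) 2 := lp.memℓp _
    have h2 := (memℓp_gen_iff (p := (2:ℝ≥0∞)) (by norm_num)).1 h1
    have : (fun i : ℤ => ‖fourierBasis.repr flp i‖ ^ ((2:ℝ≥0∞)).toReal)
        = fun i : ℤ => ‖awc g i‖ ^ 2 := by
      funext i
      rw [fourierBasis_repr, hcoeff i]
      norm_num [Real.rpow_natCast]
    rwa [this] at h2
  refine ⟨hsummable, ?_⟩
  rw [hpars]
  have hmeas : MeasureTheory.volume (α := AddCircle (4*π)) = (ENNReal.ofReal (4*π)) • haarAddCircle :=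
    volume_eq_smul_haarAddCircle
  have key : ∫ t : AddCircle (4*π), ‖(flp : AddCircle (4*π) → ℂ) t‖^2 ∂haarAddCircle
      = ∫ t : AddCircle (4*π), ‖G t‖^2 ∂haarAddCircle := by
    apply MeasureTheory.integral_congr_ae
    filter_upwards [ContinuousMap.coeFn_toLp (p := 2) (μ := haarAddCircle) (𝕜 := ℂ) G] with x hx
    rw [hx]
  rw [key]
  have key2 : ∫ t : AddCircle (4*π), ‖G t‖^2 ∂MeasureTheory.volume
      = (4*π) * ∫ t : AddCircle (4*π), ‖G t‖^2 ∂haarAddCircle := by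
    rw [hmeas, MeasureTheory.integral_smul_measure, ENNReal.toReal_ofReal aw_fourpi_pos.le, smul_eq_mul]
  have key3 : ∫ t : AddCircle (4*π), ‖G t‖^2 ∂MeasureTheory.volume
      = ∫ θ in (0:ℝ)..(0+4*π), ‖G (θ : AddCircle (4*π))‖^2 :=
    (AddCircle.intervalIntegral_preimage (4*π) 0 _).symm
  have key4 : (∫ θ in (0:ℝ)..(0+4*π), ‖G (θ : AddCircle (4*π))‖^2)
      = ∫ θ in (0:ℝ)..(4*π), ‖g θ‖^2 := by
    rw [zero_add, intervalIntegral.integral_of_le aw_fourpi_pos.le,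
      intervalIntegral.integral_of_le aw_fourpi_pos.le,
      MeasureTheory.integral_Ioc_eq_integral_Ioo, MeasureTheory.integral_Ioc_eq_integral_Ioo]
    apply MeasureTheory.setIntegral_congr_fun measurableSet_Ioo
    intro x hx
    have hx' : x ∈ Set.Ico (0:ℝ) (0 + 4*π) := ⟨hx.1.le, by rw [zero_add]; exact hx.2⟩
    simp only [hGdef, ContinuousMap.coe_mk]
    rw [AddCircle.liftIco_coe_apply hx']
  have : ∫ t : AddCircle (4*π), ‖G t‖^2 ∂haarAddCircle = (1/(4*π)) * ∫ θ in (0:ℝ)..(4*π), ‖g θ‖^2 := by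
    rw [← key4, ← key3, key2]
    field_simp
  rw [this]

lemma awc_even_zero (g : ℝ → ℂ) (hg : Continuous g) (ha : ∀ θ, g (θ + 2*π) = - g θ)
    {n : ℤ} (hn : Even n) : awc g n = 0 := by
  obtain ⟨m, hm⟩ := hn
  set φ : ℝ → ℂ := fun x => Complex.exp (2 * π * Complex.I * (-n) * x / (4*π)) * g x with hφ
  have hφc : Continuous φ := by
    apply Continuous.mul _ hg
    fun_prop
  have hint : ∀ a b : ℝ, IntervalIntegrable φ volume a b := fun a b => hφc.intervalIntegrable a b
  have hshift : ∀ x : ℝ, φ (x + 2*π) = - φ x := by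
    intro x
    rw [hφ]
    simp only
    rw [ha x, mul_neg, ← neg_mul]
    congr 1
    have : 2 * ↑π * Complex.I * (-↑n) * (↑(x + 2*π)) / (4*↑π)
        = 2 * ↑π * Complex.I * (-↑n) * (↑x) / (4*↑π) + (-m) * (2 * ↑π * Complex.I) := by
      have hπ : (π : ℂ) ≠ 0 := by exact_mod_cast Real.pi_ne_zero
      have hmn : (n : ℂ) = 2 * m := by push_cast [hm]; ring
      push_cast
      rw [hmn]
      field_simp
      ring
    rw [this, Complex.exp_add, show ((-m : ℂ) * (2 * ↑π * Complex.I)) = ((-m : ℤ) : ℂ) * (2 * ↑π * Complex.I) by push_cast; ring,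
      Complex.exp_int_mul_two_pi_mul_I, mul_one]
    ring
  have hsplit : (∫ x in (0:ℝ)..(4*π), φ x)
      = (∫ x in (0:ℝ)..(2*π), φ x) + ∫ x in (2*π)..(4*π), φ x :=
    (intervalIntegral.integral_add_adjacent_intervals (hint 0 (2*π)) (hint (2*π) (4*π))).symm
  have hsecond : (∫ x in (2*π)..(4*π), φ x) = - ∫ x in (0:ℝ)..(2*π), φ x := by
    have := intervalIntegral.integral_comp_add_right (a := (0:ℝ)) (b := 2*π) (d := 2*π) φ
    rw [show (0:ℝ) + 2*π = 2*π by ring, show 2*π + 2*π = 4*π by ring] at this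
    rw [← this]
    simp_rw [hshift]
    rw [intervalIntegral.integral_neg]
  rw [awc_eq_integral]
  rw [show (∫ x in (0:ℝ)..(4*π), Complex.exp (2 * π * Complex.I * (-n) * x / (4*π)) * g x) = ∫ x in (0:ℝ)..(4*π), φ x from rfl]
  rw [hsplit, hsecond]
  simp

lemma awc_deriv (g g' : ℝ → ℂ) (hder : ∀ x, HasDerivAt g (g' x) x)
    (hg' : Continuous g') (hper : g (4*π) = g 0) {n : ℤ} (hn : n ≠ 0) :
    awc g' n = (Complex.I * n / 2) * awc g n := by
  have h := fourierCoeffOn_of_hasDerivAt aw_fourpi_pos hn (fun x _ => hder x)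
    (hg'.intervalIntegrable 0 (4*π))
  rw [hper, sub_self, mul_zero, zero_sub] at h
  rw [← awc, ← awc] at h
  have hπ : (π : ℂ) ≠ 0 := by exact_mod_cast Real.pi_ne_zero
  have hnc : (n : ℂ) ≠ 0 := by exact_mod_cast hn
  have hI := Complex.I_ne_zero
  rw [h]
  push_cast
  rw [mul_comm, div_mul_eq_mul_div, div_mul_eq_mul_div, eq_div_iff (by simp [hπ, hnc, Complex.I_ne_zero] : (-2 * (π:ℂ) * Complex.I * n) ≠ 0)]
  ring

lemma awc_pointwise (g : ℝ → ℂ) (hg : Continuous g) (hper : g 0 = g (4*π))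
    (hz : ∀ n : ℤ, n ≠ 1 → n ≠ -1 → awc g n = 0) {θ : ℝ} (hθ : θ ∈ Ico (0:ℝ) (4*π)) :
    g θ = awc g 1 * Complex.exp ((θ/2 : ℝ) * Complex.I)
        + awc g (-1) * Complex.exp (-((θ/2 : ℝ) * Complex.I)) := by
  have hG : Continuous (AddCircle.liftIco (4*π) 0 g) :=
    AddCircle.liftIco_zero_continuous hper hg.continuousOn
  set G : C(AddCircle (4*π), ℂ) := ⟨_, hG⟩ with hGdef
  have hcoeff : ∀ n : ℤ, fourierCoeff (⇑G) n = awc g n := fun n => awc_lift g n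
  have hsummable : Summable (fourierCoeff (⇑G)) := by
    apply summable_of_ne_finset_zero (s := ({1, -1} : Finset ℤ))
    intro n hn
    simp only [Finset.mem_insert, Finset.mem_singleton] at hn
    push_neg at hn
    rw [hcoeff]; exact hz n hn.1 hn.2
  have hs := has_pointwise_sum_fourier_series_of_summable hsummable (θ : AddCircle (4*π))
  have hfin : HasSum (fun i : ℤ => fourierCoeff (⇑G) i • fourier i (θ : AddCircle (4*π)))
      (∑ i ∈ ({1, -1} : Finset ℤ), fourierCoeff (⇑G) i • fourier i (θ : AddCircle (4*π))) := by
    apply hasSum_sum_of_ne_finset_zero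
    intro n hn
    simp only [Finset.mem_insert, Finset.mem_singleton] at hn
    push_neg at hn
    rw [hcoeff, hz n hn.1 hn.2, zero_smul]
  have hGθ : G (θ : AddCircle (4*π)) = g θ := by
    simp only [hGdef, ContinuousMap.coe_mk]
    exact AddCircle.liftIco_coe_apply (by rwa [zero_add])
  have heq := hs.unique hfin
  rw [hGθ] at heq
  rw [heq, Finset.sum_pair (by norm_num : (1:ℤ) ≠ -1)]
  have hπ : (π : ℂ) ≠ 0 := by exact_mod_cast Real.pi_ne_zero
  have h1 : fourier 1 (θ : AddCircle (4*π)) = Complex.exp ((θ/2 : ℝ) * Complex.I) := by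
    rw [fourier_coe_apply]
    congr 1
    push_cast
    field_simp
    ring
  have h2 : fourier (-1) (θ : AddCircle (4*π)) = Complex.exp (-((θ/2 : ℝ) * Complex.I)) := by
    rw [fourier_coe_apply]
    congr 1
    push_cast
    field_simp
    ring
  rw [h1, h2, smul_eq_mul, smul_eq_mul, hcoeff, hcoeff]

lemma aw_reverse (a b : ℝ) :
    (∫ θ in (0:ℝ)..(4 * π), (deriv (fun θ : ℝ => a * Real.cos (θ/2) + b * Real.sin (θ/2)) θ) ^ 2)
      = (1 / 4) * ∫ θ in (0:ℝ)..(4 * π), (a * Real.cos (θ/2) + b * Real.sin (θ/2)) ^ 2 := by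
  set F : ℝ → ℝ := fun θ : ℝ => a * Real.cos (θ/2) + b * Real.sin (θ/2) with hF
  have hhd : ∀ θ : ℝ, HasDerivAt F (-(a/2) * Real.sin (θ/2) + (b/2) * Real.cos (θ/2)) θ := by
    intro θ
    have h2 : HasDerivAt (fun x : ℝ => x / 2) (1/2) θ := by
      simpa using (hasDerivAt_id θ).div_const 2
    have hc : HasDerivAt (fun x : ℝ => Real.cos (x/2)) (-Real.sin (θ/2) * (1/2)) θ :=
      HasDerivAt.comp θ (h₂ := Real.cos) (h := fun x : ℝ => x / 2) (Real.hasDerivAt_cos (θ/2)) h2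
    have hs : HasDerivAt (fun x : ℝ => Real.sin (x/2)) (Real.cos (θ/2) * (1/2)) θ :=
      HasDerivAt.comp θ (h₂ := Real.sin) (h := fun x : ℝ => x / 2) (Real.hasDerivAt_sin (θ/2)) h2
    have := (hc.const_mul a).add (hs.const_mul b)
    exact this.congr_deriv (by ring)
  have hder : ∀ θ : ℝ, deriv F θ = -(a/2) * Real.sin (θ/2) + (b/2) * Real.cos (θ/2) :=
    fun θ => (hhd θ).deriv
  have key : ∀ θ : ℝ, (deriv F θ)^2
      = (1/4)*(F θ)^2 + ((b^2 - a^2)/4) * Real.cos θ - (a*b/2) * Real.sin θ := by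
    intro θ
    rw [hder, hF]
    have h1 : Real.sin (θ/2)^2 + Real.cos (θ/2)^2 = 1 := Real.sin_sq_add_cos_sq _
    have hcos : Real.cos θ = 2 * Real.cos (θ/2)^2 - 1 := by
      rw [show θ = 2 * (θ/2) by ring, Real.cos_two_mul]
      ring_nf
    have hsin : Real.sin θ = 2 * Real.sin (θ/2) * Real.cos (θ/2) := by
      rw [show θ = 2 * (θ/2) by ring, Real.sin_two_mul]
      ring_nf
    simp only
    linear_combination ((a^2 - b^2)/4) * h1 - ((b^2 - a^2)/4) * hcos + (a*b/2) * hsin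
  rw [intervalIntegral.integral_congr (g := fun θ : ℝ =>
      (1/4)*(F θ)^2 + ((b^2 - a^2)/4) * Real.cos θ - (a*b/2) * Real.sin θ) (fun θ _ => key θ)]
  have hFc : Continuous F := by fun_prop
  have hi1 : IntervalIntegrable (fun θ : ℝ => (1/4)*(F θ)^2) volume 0 (4*π) :=
    (by fun_prop : Continuous fun θ : ℝ => (1/4)*(F θ)^2).intervalIntegrable _ _
  have hi2 : IntervalIntegrable (fun θ : ℝ => ((b^2 - a^2)/4) * Real.cos θ) volume 0 (4*π) :=
    (by fun_prop : Continuous fun θ : ℝ => ((b^2 - a^2)/4) * Real.cos θ).intervalIntegrable _ _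
  have hi3 : IntervalIntegrable (fun θ : ℝ => (a*b/2) * Real.sin θ) volume 0 (4*π) :=
    (by fun_prop : Continuous fun θ : ℝ => (a*b/2) * Real.sin θ).intervalIntegrable _ _
  rw [intervalIntegral.integral_sub (hi1.add hi2) hi3, intervalIntegral.integral_add hi1 hi2,
    intervalIntegral.integral_const_mul, intervalIntegral.integral_const_mul,
    intervalIntegral.integral_const_mul, integral_cos, integral_sin]
  have hs4 : Real.sin (4*π) = 0 := by
    rw [show (4:ℝ)*π = (4:ℕ)*π by norm_num]
    exact Real.sin_nat_mul_pi 4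
  have hc4 : Real.cos (4*π) = 1 := by
    rw [show (4:ℝ)*π = (2:ℕ)*(2*π) by push_cast; ring]
    exact Real.cos_nat_mul_two_pi 2
  rw [hs4, hc4]
  norm_num
  rfl

end AW

open Real intervalIntegral

/-- Equality case in the anti-periodic Wirtinger inequality:
for `f` C¹ with `f (θ + 2π) = -f θ`, equality
`∫₀^{4π} f'² = (1/4) ∫₀^{4π} f²` holds iff `f θ = a cos(θ/2) + b sin(θ/2)`. -/
theorem antiperiodic_wirtinger_equality (f : ℝ → ℝ) (hf : ContDiff ℝ 1 f)
    (hanti : ∀ θ : ℝ, f (θ + 2 * π) = - f θ) :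
    (∫ θ in (0:ℝ)..(4 * π), (deriv f θ) ^ 2) = (1 / 4) * ∫ θ in (0:ℝ)..(4 * π), (f θ) ^ 2 ↔
      ∃ a b : ℝ, ∀ θ : ℝ, f θ = a * Real.cos (θ / 2) + b * Real.sin (θ / 2) := by
  constructor
  · intro hEq
    set F : ℝ → ℂ := fun θ => (f θ : ℂ) with hFdef
    set F' : ℝ → ℂ := fun θ => ((deriv f θ : ℝ) : ℂ) with hF'def
    have hfc : Continuous f := hf.continuous
    have hfd : Differentiable ℝ f := hf.differentiable one_ne_zero
    have hf'c : Continuous (deriv f) := hf.continuous_deriv le_rfl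
    have hFc : Continuous F := Complex.continuous_ofReal.comp hfc
    have hF'c : Continuous F' := Complex.continuous_ofReal.comp hf'c
    have hder : ∀ x, HasDerivAt F (F' x) x := fun x => (hfd x).hasDerivAt.ofReal_comp
    have hanti' : ∀ θ : ℝ, deriv f (θ + 2*π) = - deriv f θ := by
      intro θ
      have h1 : deriv (fun t => f (t + 2*π)) θ = deriv f (θ + 2*π) :=
        deriv_comp_add_const f (2*π) θ
      have h2 : (fun t => f (t + 2*π)) = fun t => - f t := funext hanti
      rw [← h1, h2, deriv.fun_neg]
    have hfper : ∀ θ : ℝ, f (θ + 4*π) = f θ := by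
      intro θ
      have h := hanti (θ + 2*π)
      rw [show θ + 2*π + 2*π = θ + 4*π by ring, hanti θ] at h
      simpa using h
    have hf'per : ∀ θ : ℝ, deriv f (θ + 4*π) = deriv f θ := by
      intro θ
      have h := hanti' (θ + 2*π)
      rw [show θ + 2*π + 2*π = θ + 4*π by ring, hanti' θ] at h
      simpa using h
    have hFper : F (4*π) = F 0 := by
      have := hfper 0
      rw [zero_add] at this
      simp [hFdef, this]
    have hF'per : F' (4*π) = F' 0 := by
      have := hf'per 0
      rw [zero_add] at this
      simp [hF'def, this]
    have heven : ∀ {n : ℤ}, Even n → awc F n = 0 := fun {n} hn =>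
      awc_even_zero F hFc (by intro θ; simp [hFdef, hanti θ]) hn
    have heven' : ∀ {n : ℤ}, Even n → awc F' n = 0 := fun {n} hn =>
      awc_even_zero F' hF'c (by intro θ; simp [hF'def, hanti' θ]) hn
    have hnormsq : ∀ n : ℤ, ‖awc F' n‖^2 = ((n:ℝ)^2/4) * ‖awc F n‖^2 := by
      intro n
      by_cases hn : n = 0
      · subst hn
        rw [heven' Even.zero]
        simp
      · rw [awc_deriv F F' hder hF'c hFper hn]
        rw [norm_mul, mul_pow]
        congr 1
        rw [norm_div, norm_mul, Complex.norm_I, one_mul]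
        rw [show ‖((n:ℂ))‖ = |(n:ℝ)| by
          rw [show ((n:ℂ)) = ((n:ℝ) : ℂ) by push_cast; ring, Complex.norm_real, Real.norm_eq_abs]]
        rw [div_pow, _root_.sq_abs]
        norm_num
    obtain ⟨hsum, hps⟩ := awc_parseval F hFc hFper.symm
    obtain ⟨hsum', hps'⟩ := awc_parseval F' hF'c hF'per.symm
    have e1 : (∫ θ in (0:ℝ)..(4*π), ‖F θ‖^2) = ∫ θ in (0:ℝ)..(4*π), (f θ)^2 := by
      apply intervalIntegral.integral_congr
      intro θ _
      simp [hFdef, Complex.norm_real, Real.norm_eq_abs, sq_abs]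
    have e2 : (∫ θ in (0:ℝ)..(4*π), ‖F' θ‖^2) = ∫ θ in (0:ℝ)..(4*π), (deriv f θ)^2 := by
      apply intervalIntegral.integral_congr
      intro θ _
      simp [hF'def, Complex.norm_real, Real.norm_eq_abs, sq_abs]
    rw [e1] at hps
    rw [e2, hEq] at hps'
    have hT : (∑' n : ℤ, ‖awc F' n‖^2) = (1/4) * ∑' n : ℤ, ‖awc F n‖^2 := by
      rw [hps, hps']
      ring
    set u : ℤ → ℝ := fun n => ‖awc F' n‖^2 - (1/4) * ‖awc F n‖^2 with hu
    have hsumu : Summable u := hsum'.sub (hsum.mul_left (1/4))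
    have htsumu : ∑' n, u n = 0 := by
      rw [hu]
      rw [Summable.tsum_sub hsum' (hsum.mul_left (1/4)), tsum_mul_left, hT]
      ring
    have hunn : ∀ n, 0 ≤ u n := by
      intro n
      rcases Int.even_or_odd n with he | ho
      · simp [hu, heven he, heven' he]
      · have hn0 : n ≠ 0 := by
          rintro rfl
          exact (Int.not_odd_iff_even.mpr Even.zero) ho
        have h1 : (1:ℝ) ≤ (n:ℝ)^2 := by
          have h2 : 1 ≤ n ∨ n ≤ -1 := by omega
          have : (1:ℝ) ≤ |(n:ℝ)| := by
            rcases h2 with h | h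
            · rw [abs_of_pos (by exact_mod_cast h : (0:ℝ) < n)]; exact_mod_cast h
            · rw [abs_of_neg (by exact_mod_cast (by omega : n < 0) : (n:ℝ) < 0)]
              have : (1:ℤ) ≤ -n := by omega
              exact_mod_cast this
          nlinarith [_root_.sq_abs ((n:ℝ))]
        rw [hu]
        simp only
        rw [hnormsq n]
        nlinarith [sq_nonneg ‖awc F n‖]
    have hueq0 : ∀ n, u n = 0 := by
      intro n
      refine le_antisymm ?_ (hunn n)
      calc u n ≤ ∑' m, u m := Summable.le_tsum hsumu n (fun j _ => hunn j)
        _ = 0 := htsumu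
    have hz : ∀ n : ℤ, n ≠ 1 → n ≠ -1 → awc F n = 0 := by
      intro n h1 h2
      rcases Int.even_or_odd n with he | ho
      · exact heven he
      · have hn0 : n ≠ 0 := by
          rintro rfl
          exact (Int.not_odd_iff_even.mpr Even.zero) ho
        have h4 : (4:ℝ) ≤ (n:ℝ)^2 := by
          have h2' : 2 ≤ n ∨ n ≤ -2 := by omega
          rcases h2' with h | h
          · have : (2:ℝ) ≤ (n:ℝ) := by exact_mod_cast h
            nlinarith
          · have : (n:ℝ) ≤ -2 := by exact_mod_cast h
            nlinarith
        have h0 := hueq0 n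
        rw [hu] at h0
        simp only at h0
        rw [hnormsq n] at h0
        have hcn : ‖awc F n‖^2 = 0 := by nlinarith [sq_nonneg ‖awc F n‖]
        have : ‖awc F n‖ = 0 := by
          have := sq_eq_zero_iff.mp hcn
          exact this
        exact norm_eq_zero.mp this
    refine ⟨(awc F 1).re + (awc F (-1)).re, (awc F (-1)).im - (awc F 1).im, ?_⟩
    set a : ℝ := (awc F 1).re + (awc F (-1)).re with ha
    set b : ℝ := (awc F (-1)).im - (awc F 1).im with hb
    have hIco : ∀ θ ∈ Set.Ico (0:ℝ) (4*π), f θ = a * Real.cos (θ/2) + b * Real.sin (θ/2) := by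
      intro θ hθ
      have h := awc_pointwise F hFc hFper.symm hz hθ
      have hre : f θ = (F θ).re := by simp [hFdef]
      rw [hre, h]
      have e1 : Complex.exp ((θ/2 : ℝ) * Complex.I)
          = (Real.cos (θ/2) : ℂ) + (Real.sin (θ/2) : ℂ) * Complex.I := by
        rw [Complex.exp_mul_I, Complex.ofReal_cos, Complex.ofReal_sin]
      have e2 : Complex.exp (-((θ/2 : ℝ) * Complex.I))
          = (Real.cos (θ/2) : ℂ) - (Real.sin (θ/2) : ℂ) * Complex.I := by
        rw [← neg_mul, Complex.exp_mul_I, Complex.cos_neg, Complex.sin_neg,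
          Complex.ofReal_cos, Complex.ofReal_sin]
        ring
      rw [e1, e2]
      simp only [Complex.add_re, Complex.mul_re, Complex.sub_re, Complex.add_im, Complex.sub_im,
        Complex.mul_im, Complex.I_re, Complex.I_im, Complex.ofReal_re, Complex.ofReal_im]
      rw [ha, hb]
      ring
    intro θ
    have hg : Function.Periodic
        (fun x => f x - (a * Real.cos (x/2) + b * Real.sin (x/2))) (4*π) := by
      intro x
      have hfp := hfper x
      have hc : Real.cos ((x + 4*π)/2) = Real.cos (x/2) := by
        rw [show (x+4*π)/2 = x/2 + 2*π by ring, Real.cos_add_two_pi]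
      have hs : Real.sin ((x + 4*π)/2) = Real.sin (x/2) := by
        rw [show (x+4*π)/2 = x/2 + 2*π by ring, Real.sin_add_two_pi]
      simp only [hfp, hc, hs]
    obtain ⟨y, hy, hxy⟩ := hg.exists_mem_Ico₀ aw_fourpi_pos θ
    have hzero := hIco y hy
    have : f θ - (a * Real.cos (θ/2) + b * Real.sin (θ/2)) = 0 := by
      rw [hxy, hzero]
      ring
    linarith [this]
  · rintro ⟨a, b, hab⟩
    have hfe : f = fun θ => a * Real.cos (θ/2) + b * Real.sin (θ/2) := funext hab
    rw [hfe]
    exact aw_reverse a b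
end

section
/- Suppose φ : ℝⁿ → ℝ is continuous and satisfies both homogeneity conditions φ(λx) = λ^β φ(x) and φ(λx + z) = λ^β φ(x + z) for all λ > 0 and all x ∈ ℝⁿ, where z ∈ ℝⁿ is fixed and β > 0. Then φ is invariant under translation by z: φ(x + tz) = φ(x) for all x ∈ ℝⁿ and t ∈ ℝ. -/
open Real Set

/-- If a continuous `φ : ℝⁿ → ℝ` is homogeneous of degree `β > 0` about both `0` and
about the center `z` (i.e. `φ(λx) = λ^β φ(x)` and `φ(λx + z) = λ^β φ(x + z)` for all
`λ > 0`), then `φ` is invariant under all translations by multiples of `z`. -/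
theorem homogeneous_two_centers_translation_invariant {n : ℕ}
    (φ : EuclideanSpace ℝ (Fin n) → ℝ) (hφ : Continuous φ)
    (z : EuclideanSpace ℝ (Fin n)) (β : ℝ) (hβ : 0 < β)
    (h1 : ∀ l : ℝ, 0 < l → ∀ x, φ (l • x) = l ^ β * φ x)
    (h2 : ∀ l : ℝ, 0 < l → ∀ x, φ (l • x + z) = l ^ β * φ (x + z)) :
    ∀ (x : EuclideanSpace ℝ (Fin n)) (t : ℝ), φ (x + t • z) = φ x := by
  intro x t
  set s : ℝ := Real.sqrt (t ^ 2 + 4) with hs_def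
  have hs : s ^ 2 = t ^ 2 + 4 := Real.sq_sqrt (by positivity)
  have hs0 : 0 ≤ s := Real.sqrt_nonneg _
  set l : ℝ := (-t + s) / 2 with hl_def
  have hl : 0 < l := by
    have ht : t < s := by nlinarith [abs_nonneg t, sq_abs t, le_abs_self t]
    simp only [hl_def]; linarith
  have hl' : l ≠ 0 := ne_of_gt hl
  have hq : l ^ 2 + t * l = 1 := by simp only [hl_def]; nlinarith
  have ht_eq : t = l⁻¹ - l := by
    field_simp
    nlinarith
  -- Key vector identities
  have e1 : x + t • z = l⁻¹ • (l • x + (-(l ^ 2)) • z + z) := by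
    rw [ht_eq]
    have h2' : l⁻¹ * l ^ 2 = l := by field_simp
    match_scalars <;> (field_simp; try ring)
  have e2 : l • x + (-(l ^ 2)) • z + z = (l ^ 2) • (l⁻¹ • x + (-1 : ℝ) • z) + z := by
    match_scalars <;> (field_simp; try ring)
  have e3 : l⁻¹ • x + (-1 : ℝ) • z + z = l⁻¹ • x := by
    match_scalars <;> ring
  have A := h1 l⁻¹ (inv_pos.2 hl) (l • x + (-(l ^ 2)) • z + z)
  have B := h2 (l ^ 2) (by positivity) (l⁻¹ • x + (-1 : ℝ) • z)
  have C := h1 l⁻¹ (inv_pos.2 hl) x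
  rw [e1, A, e2, B, e3, C]
  have hpow : l⁻¹ ^ β * ((l ^ 2) ^ β * (l⁻¹ ^ β * φ x)) = φ x := by
    rw [← mul_assoc, ← mul_assoc, ← Real.mul_rpow (by positivity) (by positivity),
      ← Real.mul_rpow (by positivity) (by positivity)]
    have : l⁻¹ * l ^ 2 * l⁻¹ = 1 := by field_simp
    rw [this, Real.one_rpow, one_mul]
  exact hpow
end

section
/- Let w : B₁ → ℝ^k be C¹ with w(0) = 0, satisfying the gradient bound sup_{B_ρ} |Dw| ≤ K (ρ^{-2-n} ∫_{B_ρ} |w|²)^{1/2} for all ρ < ρ₀. Then there is a constant C = C(n, k, K) such that ∫_{B_ρ} |w|² ≤ C ρ² ∫_{B_ρ} |Dw|² for all ρ < ρ₀. -/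
open Real Set Metric MeasureTheory Pointwise

lemma sq_setIntegral_le_aux {f : ℝ → ℝ} (hf : IntegrableOn f (Ioc (0:ℝ) 1))
    (hf2 : IntegrableOn (fun t => f t ^ 2) (Ioc (0:ℝ) 1)) :
    (∫ t in Ioc (0:ℝ) 1, f t) ^ 2 ≤ ∫ t in Ioc (0:ℝ) 1, f t ^ 2 := by
  set μ := volume.restrict (Ioc (0:ℝ) 1) with hμdef
  haveI : IsFiniteMeasure μ := ⟨by simp [hμdef, Measure.restrict_apply_univ]⟩
  have hμ : (μ univ).toReal = 1 := by
    simp [hμdef, Measure.restrict_apply_univ, Real.volume_Ioc]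
  set A := ∫ t, f t ∂μ with hA
  have h0 : (0:ℝ) ≤ ∫ t, (f t - A)^2 ∂μ := integral_nonneg (fun t => sq_nonneg _)
  have hexp : ∫ t, (f t - A)^2 ∂μ = (∫ t, f t ^ 2 ∂μ) - 2*A*A + A^2 := by
    have h1 : ∀ t, (f t - A)^2 = f t ^ 2 - 2*A*(f t) + A^2 := fun t => by ring
    simp_rw [h1]
    have hcm : Integrable (fun t => 2*A*(f t)) μ := hf.const_mul (2*A)
    have hsub : Integrable (fun t => f t ^ 2 - 2*A*(f t)) μ := hf2.sub hcm
    rw [integral_add hsub (integrable_const _), integral_sub hf2 hcm,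
      integral_const_mul, integral_const, smul_eq_mul, measureReal_def, hμ]
    ring
  nlinarith [h0, hexp]

set_option maxHeartbeats 1600000 in
/-- Poincaré-type inequality 6.5: there is `C = C(n,k,K)` such that any `C¹` map
`w : B₁ → ℝᵏ` with `w(0) = 0` satisfying the Schauder-type gradient bound
`sup_{B_ρ} |Dw| ≤ K (ρ^{-2-n} ∫_{B_ρ} |w|²)^{1/2}` for all `ρ < ρ₀` also satisfies
`∫_{B_ρ} |w|² ≤ C ρ² ∫_{B_ρ} |Dw|²` for all `ρ < ρ₀`. -/
theorem poincare_from_gradient_bound (n k : ℕ) (K : ℝ) (hK : 0 < K) :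
    ∃ C : ℝ, 0 < C ∧
      ∀ (w : EuclideanSpace ℝ (Fin n) → EuclideanSpace ℝ (Fin k)) (ρ₀ : ℝ),
        0 < ρ₀ → ρ₀ ≤ 1 →
        ContDiffOn ℝ 1 w (ball (0 : EuclideanSpace ℝ (Fin n)) 1) →
        w 0 = 0 →
        (∀ ρ : ℝ, 0 < ρ → ρ < ρ₀ →
          ∀ x ∈ ball (0 : EuclideanSpace ℝ (Fin n)) ρ,
            ‖fderiv ℝ w x‖ ≤
              K * (ρ ^ (-2 - (n : ℝ)) *
                ∫ z in ball (0 : EuclideanSpace ℝ (Fin n)) ρ, ‖w z‖ ^ 2) ^ ((1:ℝ)/2)) →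
        ∀ ρ : ℝ, 0 < ρ → ρ < ρ₀ →
          (∫ z in ball (0 : EuclideanSpace ℝ (Fin n)) ρ, ‖w z‖ ^ 2) ≤
            C * ρ ^ 2 * ∫ z in ball (0 : EuclideanSpace ℝ (Fin n)) ρ, ‖fderiv ℝ w z‖ ^ 2 := by
  classical
  rcases Nat.eq_zero_or_pos n with hn | hn
  · subst hn
    refine ⟨1, one_pos, ?_⟩
    intro w ρ₀ hρ₀ hρ₀1 hw hw0 hgrad ρ hρ hρρ₀
    haveI : Subsingleton (EuclideanSpace ℝ (Fin 0)) :=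
      ⟨fun a b => by ext i; exact Fin.elim0 i⟩
    have hwz : ∀ z : EuclideanSpace ℝ (Fin 0), w z = 0 := fun z => by
      rw [Subsingleton.elim z 0, hw0]
    have hI : (∫ z in ball (0 : EuclideanSpace ℝ (Fin 0)) ρ, ‖w z‖ ^ 2) = 0 := by
      simp [hwz]
    rw [hI]
    have hJ : (0:ℝ) ≤ ∫ z in ball (0 : EuclideanSpace ℝ (Fin 0)) ρ, ‖fderiv ℝ w z‖ ^ 2 :=
      setIntegral_nonneg measurableSet_ball (fun _ _ => by positivity)
    positivity
  haveI hNT : Nontrivial (EuclideanSpace ℝ (Fin n)) :=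
    Module.nontrivial_of_finrank_pos (R := ℝ) (by rw [finrank_euclideanSpace_fin]; exact hn)
  set V₁ : ℝ := (volume (ball (0 : EuclideanSpace ℝ (Fin n)) 1)).toReal with hV₁def
  have hV₁pos : 0 < V₁ := by
    refine ENNReal.toReal_pos (measure_ball_pos _ _ one_pos).ne' measure_ball_lt_top.ne
  set ε : ℝ := min 1 (1/(2*K^2*V₁)) with hεdef
  have hε0 : 0 < ε := lt_min one_pos (by positivity)
  have hε1 : ε ≤ 1 := min_le_left _ _
  have hεhalf : ε * (K^2*V₁) ≤ 1/2 := by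
    have h2 : ε ≤ 1/(2*K^2*V₁) := min_le_right _ _
    have h3 : (1/(2*K^2*V₁)) * (K^2*V₁) = 1/2 := by
      field_simp
    calc ε * (K^2*V₁) ≤ (1/(2*K^2*V₁)) * (K^2*V₁) :=
          mul_le_mul_of_nonneg_right h2 (by positivity)
      _ = 1/2 := h3
  refine ⟨2 * ε⁻¹ ^ n, by positivity, ?_⟩
  intro w ρ₀ hρ₀ hρ₀1 hw hw0 hgrad ρ hρ hρρ₀
  have hρ1 : ρ < 1 := lt_of_lt_of_le hρρ₀ hρ₀1
  have hgB := hgrad ρ hρ hρρ₀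
  set I := ∫ z in ball (0 : EuclideanSpace ℝ (Fin n)) ρ, ‖w z‖ ^ 2 with hIdef
  set J := ∫ z in ball (0 : EuclideanSpace ℝ (Fin n)) ρ, ‖fderiv ℝ w z‖ ^ 2 with hJdef
  have hI0 : 0 ≤ I := setIntegral_nonneg measurableSet_ball (fun _ _ => by positivity)
  have hJ0 : 0 ≤ J := setIntegral_nonneg measurableSet_ball (fun _ _ => by positivity)
  set M : ℝ := K * (ρ ^ (-2 - (n:ℝ)) * I) ^ ((1:ℝ)/2) with hMdef
  have hx0 : 0 ≤ ρ ^ (-2 - (n:ℝ)) * I :=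
    mul_nonneg (Real.rpow_nonneg hρ.le _) hI0
  have hM0 : 0 ≤ M := mul_nonneg hK.le (Real.rpow_nonneg hx0 _)
  have hMsq : M^2 = K^2 * (ρ ^ (-2 - (n:ℝ)) * I) := by
    rw [hMdef, mul_pow]
    congr 1
    rw [← Real.rpow_natCast ((ρ ^ (-2 - (n:ℝ)) * I) ^ ((1:ℝ)/2)) 2, ← Real.rpow_mul hx0]
    norm_num
  have hwc : ContinuousOn w (ball (0 : EuclideanSpace ℝ (Fin n)) 1) := hw.continuousOn
  have hDc : ContinuousOn (fderiv ℝ w) (ball (0 : EuclideanSpace ℝ (Fin n)) 1) :=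
    hw.continuousOn_fderiv_of_isOpen isOpen_ball le_rfl
  have hwd : ∀ y ∈ ball (0 : EuclideanSpace ℝ (Fin n)) 1, DifferentiableAt ℝ w y :=
    fun y hy => ((hw.differentiableOn one_ne_zero).differentiableAt (isOpen_ball.mem_nhds hy))
  set f : EuclideanSpace ℝ (Fin n) → ℝ → ℝ :=
    fun x t => ‖fderiv ℝ w (t • x)‖ ^ 2 with hfdef
  have hsmem : ∀ x ∈ ball (0 : EuclideanSpace ℝ (Fin n)) ρ, ∀ t ∈ Icc (0:ℝ) 1,
      t • x ∈ ball (0 : EuclideanSpace ℝ (Fin n)) ρ := by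
    intro x hx t ht
    rw [mem_ball_zero_iff] at hx ⊢
    rw [norm_smul, Real.norm_eq_abs, abs_of_nonneg ht.1]
    calc t * ‖x‖ ≤ 1 * ‖x‖ := mul_le_mul_of_nonneg_right ht.2 (norm_nonneg _)
      _ = ‖x‖ := one_mul _
      _ < ρ := hx
  have hballsub : ball (0 : EuclideanSpace ℝ (Fin n)) ρ ⊆ ball (0 : EuclideanSpace ℝ (Fin n)) 1 :=
    ball_subset_ball hρ1.le
  have hDcsq : ContinuousOn (fun y => ‖fderiv ℝ w y‖ ^ 2) (ball (0 : EuclideanSpace ℝ (Fin n)) 1) :=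
    hDc.norm.pow 2
  have hJint : IntegrableOn (fun y => ‖fderiv ℝ w y‖ ^ 2) (ball (0 : EuclideanSpace ℝ (Fin n)) ρ) := by
    have h1 : IntegrableOn (fun y => ‖fderiv ℝ w y‖ ^ 2)
        (closedBall (0 : EuclideanSpace ℝ (Fin n)) ρ) :=
      (hDcsq.mono (closedBall_subset_ball hρ1)).integrableOn_compact (isCompact_closedBall _ _)
    exact h1.mono_set ball_subset_closedBall
  have hmeasf : AEStronglyMeasurable (Function.uncurry f)
      ((volume.restrict (ball (0 : EuclideanSpace ℝ (Fin n)) ρ)).prod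
        (volume.restrict (Ioc (0:ℝ) 1))) := by
    have hm : Measurable (Function.uncurry f) := by
      have h1 : Measurable fun p : EuclideanSpace ℝ (Fin n) × ℝ => p.2 • p.1 :=
        measurable_snd.smul measurable_fst
      exact (((measurable_fderiv ℝ w).comp h1).norm.pow_const 2)
    exact hm.aestronglyMeasurable
  have hbound : ∀ᵐ p ∂((volume.restrict (ball (0 : EuclideanSpace ℝ (Fin n)) ρ)).prod
      (volume.restrict (Ioc (0:ℝ) 1))), ‖Function.uncurry f p‖ ≤ M^2 := by
    rw [Measure.prod_restrict]
    rw [ae_restrict_iff' (measurableSet_ball.prod measurableSet_Ioc)]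
    filter_upwards with p hp
    obtain ⟨hp1, hp2⟩ := hp
    have hmem : p.2 • p.1 ∈ ball (0 : EuclideanSpace ℝ (Fin n)) ρ :=
      hsmem p.1 hp1 p.2 ⟨hp2.1.le, hp2.2⟩
    have h2 : ‖fderiv ℝ w (p.2 • p.1)‖ ^ 2 ≤ M ^ 2 :=
      pow_le_pow_left₀ (norm_nonneg _) (hgB _ hmem) 2
    calc ‖Function.uncurry f p‖ = ‖(‖fderiv ℝ w (p.2 • p.1)‖ ^ 2 : ℝ)‖ := rfl
      _ = ‖fderiv ℝ w (p.2 • p.1)‖ ^ 2 := by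
          rw [Real.norm_eq_abs, abs_of_nonneg (by positivity : (0:ℝ) ≤ ‖fderiv ℝ w (p.2 • p.1)‖ ^ 2)]
      _ ≤ M ^ 2 := h2
  haveI hfin1 : IsFiniteMeasure (volume.restrict (ball (0 : EuclideanSpace ℝ (Fin n)) ρ)) :=
    ⟨by rw [Measure.restrict_apply_univ]; exact measure_ball_lt_top⟩
  haveI hfin2 : IsFiniteMeasure (volume.restrict (Ioc (0:ℝ) 1)) :=
    ⟨by rw [Measure.restrict_apply_univ, Real.volume_Ioc]; exact ENNReal.ofReal_lt_top⟩
  have hH : Integrable (Function.uncurry f)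
      ((volume.restrict (ball (0 : EuclideanSpace ℝ (Fin n)) ρ)).prod
        (volume.restrict (Ioc (0:ℝ) 1))) :=
    (integrable_const (M^2)).mono' hmeasf hbound
  have hmarg1 : Integrable (fun x => ∫ t in Ioc (0:ℝ) 1, f x t)
      (volume.restrict (ball (0 : EuclideanSpace ℝ (Fin n)) ρ)) := hH.integral_prod_left
  have key : ∀ x ∈ ball (0 : EuclideanSpace ℝ (Fin n)) ρ,
      ‖w x‖ ^ 2 ≤ ρ^2 * ∫ t in Ioc (0:ℝ) 1, f x t := by
    intro x hx
    have hxb1 : ∀ t ∈ Icc (0:ℝ) 1, t • x ∈ ball (0 : EuclideanSpace ℝ (Fin n)) 1 :=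
      fun t ht => hballsub (hsmem x hx t ht)
    have hmap : ContinuousOn (fun t : ℝ => t • x) (Icc 0 1) :=
      (continuous_id.smul continuous_const).continuousOn
    have h1 : ContinuousOn (fun t : ℝ => fderiv ℝ w (t • x)) (Icc 0 1) :=
      hDc.comp hmap (fun t ht => hxb1 t ht)
    set g' : ℝ → EuclideanSpace ℝ (Fin k) := fun t => (fderiv ℝ w (t • x)) x with hg'def
    have hg'cont : ContinuousOn g' (Icc 0 1) := h1.clm_apply continuousOn_const
    have hderiv : ∀ t ∈ Icc (0:ℝ) 1, HasDerivAt (fun s : ℝ => w (s • x)) (g' t) t := by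
      intro t ht
      have hdw : HasFDerivAt w (fderiv ℝ w (t • x)) (t • x) :=
        (hwd _ (hxb1 t ht)).hasFDerivAt
      have hsm : HasDerivAt (fun s : ℝ => s • x) x t := by
        simpa using (hasDerivAt_id t).smul_const x
      exact hdw.comp_hasDerivAt t hsm
    have hFTC := intervalIntegral.integral_eq_sub_of_hasDerivAt
      (f := fun s : ℝ => w (s • x)) (f' := g') (a := 0) (b := 1)
      (by intro t ht; rw [uIcc_of_le zero_le_one] at ht; exact hderiv t ht)
      (by apply ContinuousOn.intervalIntegrable; rwa [uIcc_of_le zero_le_one])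
    have hw1 : w x = ∫ t in (0:ℝ)..1, g' t := by
      rw [hFTC]
      simp [hw0]
    have hnorm1 : ‖w x‖ ≤ ∫ t in Ioc (0:ℝ) 1, ‖g' t‖ := by
      rw [hw1]
      calc ‖∫ t in (0:ℝ)..1, g' t‖ ≤ ∫ t in (0:ℝ)..1, ‖g' t‖ :=
            intervalIntegral.norm_integral_le_integral_norm zero_le_one
        _ = ∫ t in Ioc (0:ℝ) 1, ‖g' t‖ := intervalIntegral.integral_of_le zero_le_one
    have hint1 : IntegrableOn (fun t => ‖g' t‖) (Ioc (0:ℝ) 1) :=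
      ((hg'cont.norm).integrableOn_compact isCompact_Icc).mono_set Ioc_subset_Icc_self
    have hint2 : IntegrableOn (fun t => ‖g' t‖ ^ 2) (Ioc (0:ℝ) 1) :=
      ((hg'cont.norm.pow 2).integrableOn_compact isCompact_Icc).mono_set Ioc_subset_Icc_self
    have hCS : (∫ t in Ioc (0:ℝ) 1, ‖g' t‖) ^ 2 ≤ ∫ t in Ioc (0:ℝ) 1, ‖g' t‖ ^ 2 :=
      sq_setIntegral_le_aux hint1 hint2
    have hsq : ‖w x‖ ^ 2 ≤ ∫ t in Ioc (0:ℝ) 1, ‖g' t‖ ^ 2 :=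
      le_trans (pow_le_pow_left₀ (norm_nonneg _) hnorm1 2) hCS
    have hfxcont : ContinuousOn (fun t => f x t) (Icc (0:ℝ) 1) := (h1.norm).pow 2
    have hfxint : IntegrableOn (fun t => f x t) (Ioc (0:ℝ) 1) :=
      (hfxcont.integrableOn_compact isCompact_Icc).mono_set Ioc_subset_Icc_self
    have hstep : (∫ t in Ioc (0:ℝ) 1, ‖g' t‖ ^ 2) ≤ ∫ t in Ioc (0:ℝ) 1, ρ^2 * f x t := by
      apply integral_mono_of_nonneg
      · filter_upwards with t; positivity
      · exact hfxint.const_mul (ρ^2)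
      · filter_upwards [ae_restrict_mem measurableSet_Ioc] with t ht
        have hb : ‖g' t‖ ≤ ‖fderiv ℝ w (t • x)‖ * ρ := by
          calc ‖g' t‖ ≤ ‖fderiv ℝ w (t • x)‖ * ‖x‖ :=
                (fderiv ℝ w (t • x)).le_opNorm x
            _ ≤ ‖fderiv ℝ w (t • x)‖ * ρ :=
                mul_le_mul_of_nonneg_left (mem_ball_zero_iff.1 hx).le (norm_nonneg _)
        calc ‖g' t‖ ^ 2 ≤ (‖fderiv ℝ w (t • x)‖ * ρ) ^ 2 :=
              pow_le_pow_left₀ (norm_nonneg _) hb 2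
          _ = ρ^2 * f x t := by rw [hfdef]; ring
    calc ‖w x‖ ^ 2 ≤ ∫ t in Ioc (0:ℝ) 1, ‖g' t‖ ^ 2 := hsq
      _ ≤ ∫ t in Ioc (0:ℝ) 1, ρ^2 * f x t := hstep
      _ = ρ^2 * ∫ t in Ioc (0:ℝ) 1, f x t := integral_const_mul _ _
  have step1 : I ≤ ρ^2 * ∫ x in ball (0 : EuclideanSpace ℝ (Fin n)) ρ,
      (∫ t in Ioc (0:ℝ) 1, f x t) := by
    rw [← integral_const_mul, hIdef]
    apply integral_mono_of_nonneg
    · filter_upwards with z; positivity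
    · exact hmarg1.const_mul (ρ^2)
    · filter_upwards [ae_restrict_mem measurableSet_ball] with x hx
      exact key x hx
  have hswap : (∫ x in ball (0 : EuclideanSpace ℝ (Fin n)) ρ, (∫ t in Ioc (0:ℝ) 1, f x t))
      = ∫ t in Ioc (0:ℝ) 1, (∫ x in ball (0 : EuclideanSpace ℝ (Fin n)) ρ, f x t) :=
    integral_integral_swap hH
  set φ : ℝ → ℝ := fun t => ∫ x in ball (0 : EuclideanSpace ℝ (Fin n)) ρ, f x t with hφdef
  have hφ0 : ∀ t, 0 ≤ φ t := fun t =>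
    setIntegral_nonneg measurableSet_ball (fun x _ => by positivity)
  have hφint : IntegrableOn φ (Ioc (0:ℝ) 1) := hH.integral_prod_right
  have hsplit : (∫ t in Ioc (0:ℝ) 1, φ t)
      = (∫ t in Ioc (0:ℝ) ε, φ t) + ∫ t in Ioc ε 1, φ t := by
    rw [← setIntegral_union (Set.Ioc_disjoint_Ioc_of_le le_rfl) measurableSet_Ioc
      (hφint.mono_set (Ioc_subset_Ioc_right hε1)) (hφint.mono_set (Ioc_subset_Ioc_left hε0.le)),
      Ioc_union_Ioc_eq_Ioc hε0.le hε1]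
  set V : ℝ := (volume (ball (0 : EuclideanSpace ℝ (Fin n)) ρ)).toReal with hVdef
  have hb1 : (∫ t in Ioc (0:ℝ) ε, φ t) ≤ ε * (V * M^2) := by
    have hstep : (∫ t in Ioc (0:ℝ) ε, φ t) ≤ ∫ _t in Ioc (0:ℝ) ε, (V * M^2) := by
      apply integral_mono_of_nonneg
      · filter_upwards with t; exact hφ0 t
      · exact integrableOn_const (by rw [Real.volume_Ioc]; exact ENNReal.ofReal_ne_top)
      · filter_upwards [ae_restrict_mem measurableSet_Ioc] with t ht
        have hmono : (∫ x in ball (0 : EuclideanSpace ℝ (Fin n)) ρ, f x t)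
            ≤ ∫ _x in ball (0 : EuclideanSpace ℝ (Fin n)) ρ, M^2 := by
          apply integral_mono_of_nonneg
          · filter_upwards with z; positivity
          · exact integrableOn_const measure_ball_lt_top.ne
          · filter_upwards [ae_restrict_mem measurableSet_ball] with x hx
            have hmem : t • x ∈ ball (0 : EuclideanSpace ℝ (Fin n)) ρ :=
              hsmem x hx t ⟨ht.1.le, le_trans ht.2 hε1⟩
            exact pow_le_pow_left₀ (norm_nonneg _) (hgB _ hmem) 2
        rw [setIntegral_const, smul_eq_mul] at hmono
        exact hmono
    calc (∫ t in Ioc (0:ℝ) ε, φ t) ≤ ∫ _t in Ioc (0:ℝ) ε, (V * M^2) := hstep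
      _ = ε * (V * M^2) := by
          rw [setIntegral_const, smul_eq_mul, measureReal_def, Real.volume_Ioc,
            ENNReal.toReal_ofReal (by linarith : (0:ℝ) ≤ ε - 0), sub_zero]
  have hb2 : (∫ t in Ioc ε 1, φ t) ≤ ε⁻¹ ^ n * J := by
    have hptw : ∀ t ∈ Ioc ε 1, φ t ≤ ε⁻¹ ^ n * J := by
      intro t ht
      have ht0 : 0 < t := lt_trans hε0 ht.1
      have hcv : φ t = (t ^ n)⁻¹ •
          (∫ y in t • (ball (0 : EuclideanSpace ℝ (Fin n)) ρ), ‖fderiv ℝ w y‖ ^ 2) := by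
        have h4 := Measure.setIntegral_comp_smul_of_pos volume
          (fun y => ‖fderiv ℝ w y‖ ^ 2) (ball (0 : EuclideanSpace ℝ (Fin n)) ρ) ht0
        simpa [hφdef, hfdef, finrank_euclideanSpace_fin] using h4
      have him : t • (ball (0 : EuclideanSpace ℝ (Fin n)) ρ)
          = ball (0 : EuclideanSpace ℝ (Fin n)) (t * ρ) := by
        rw [smul_ball ht0.ne' (0 : EuclideanSpace ℝ (Fin n)) ρ, smul_zero,
          Real.norm_eq_abs, abs_of_pos ht0]
      have hsub2 : (∫ y in ball (0 : EuclideanSpace ℝ (Fin n)) (t * ρ), ‖fderiv ℝ w y‖ ^ 2) ≤ J := by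
        apply setIntegral_mono_set hJint
        · filter_upwards with y; positivity
        · exact HasSubset.Subset.eventuallyLE (ball_subset_ball (by nlinarith [ht.2] : t * ρ ≤ ρ))
      have hJ2 : (0:ℝ) ≤ ∫ y in ball (0 : EuclideanSpace ℝ (Fin n)) (t * ρ), ‖fderiv ℝ w y‖ ^ 2 :=
        setIntegral_nonneg measurableSet_ball (fun _ _ => by positivity)
      have hinv : (t ^ n)⁻¹ ≤ ε⁻¹ ^ n := by
        rw [inv_pow]
        exact inv_anti₀ (pow_pos hε0 n) (pow_le_pow_left₀ hε0.le ht.1.le n)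
      calc φ t = (t ^ n)⁻¹ * ∫ y in ball (0 : EuclideanSpace ℝ (Fin n)) (t * ρ), ‖fderiv ℝ w y‖ ^ 2 := by
            rw [hcv, him, smul_eq_mul]
        _ ≤ ε⁻¹ ^ n * J := mul_le_mul hinv hsub2 hJ2 (by positivity)
    have hstep : (∫ t in Ioc ε 1, φ t) ≤ ∫ _t in Ioc ε 1, (ε⁻¹ ^ n * J) := by
      apply integral_mono_of_nonneg
      · filter_upwards with t; exact hφ0 t
      · exact integrableOn_const (by rw [Real.volume_Ioc]; exact ENNReal.ofReal_ne_top)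
      · filter_upwards [ae_restrict_mem measurableSet_Ioc] with t ht
        exact hptw t ht
    have hle1 : (∫ _t in Ioc ε 1, (ε⁻¹ ^ n * J)) ≤ ε⁻¹ ^ n * J := by
      rw [setIntegral_const, smul_eq_mul, measureReal_def, Real.volume_Ioc,
        ENNReal.toReal_ofReal (by linarith : (0:ℝ) ≤ 1 - ε)]
      nlinarith [mul_nonneg (pow_nonneg (inv_nonneg.2 hε0.le) n) hJ0]
    exact le_trans hstep hle1
  have hVf : V = ρ ^ n * V₁ := by
    rw [hVdef, Measure.addHaar_ball volume (0 : EuclideanSpace ℝ (Fin n)) hρ.le,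
      ENNReal.toReal_mul, ENNReal.toReal_ofReal (pow_nonneg hρ.le _),
      finrank_euclideanSpace_fin, hV₁def]
  have hpow : (ρ:ℝ) ^ (-2 - (n:ℝ)) = (ρ^2 * ρ^n)⁻¹ := by
    have h2 : (-2 - (n:ℝ)) = -(((2 + n : ℕ) : ℝ)) := by push_cast; ring
    rw [h2, Real.rpow_neg hρ.le, Real.rpow_natCast, pow_add]
  have habsorb : ρ^2 * (ε * (V * M^2)) ≤ (1/2) * I := by
    rw [hMsq, hVf, hpow]
    have hne : (ρ^2 * ρ^n : ℝ) ≠ 0 := by positivity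
    have heq : ρ^2 * (ε * ((ρ ^ n * V₁) * (K^2 * ((ρ^2 * ρ^n)⁻¹ * I))))
        = (ε * (K^2 * V₁)) * I * ((ρ^2 * ρ^n) * (ρ^2 * ρ^n)⁻¹) := by ring
    rw [heq, mul_inv_cancel₀ hne, mul_one]
    have h5 : ε * (K^2 * V₁) ≤ 1/2 := by rw [← mul_assoc]; rw [← mul_assoc] at hεhalf; exact hεhalf
    exact mul_le_mul_of_nonneg_right h5 hI0
  have main : I ≤ (1/2) * I + ρ^2 * (ε⁻¹ ^ n * J) := by
    calc I ≤ ρ^2 * ∫ x in ball (0 : EuclideanSpace ℝ (Fin n)) ρ,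
          (∫ t in Ioc (0:ℝ) 1, f x t) := step1
      _ = ρ^2 * ∫ t in Ioc (0:ℝ) 1, φ t := by rw [hswap]
      _ = ρ^2 * ((∫ t in Ioc (0:ℝ) ε, φ t) + ∫ t in Ioc ε 1, φ t) := by rw [hsplit]
      _ ≤ ρ^2 * ((ε * (V * M^2)) + ε⁻¹ ^ n * J) := by
          apply mul_le_mul_of_nonneg_left (add_le_add hb1 hb2) (by positivity)
      _ = ρ^2 * (ε * (V * M^2)) + ρ^2 * (ε⁻¹ ^ n * J) := by ring
      _ ≤ (1/2) * I + ρ^2 * (ε⁻¹ ^ n * J) := by linarith [habsorb]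
  have hfinal : I ≤ 2 * ε⁻¹ ^ n * ρ^2 * J := by nlinarith [main]
  exact hfinal
end
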